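/- Let q be an odd prime power and F = F_q. The subspaces M_γ = {[[0,x,0],[x,y,0],[0,0,γy]] : x,y ∈ F} and M_δ = {[[0,x,0],[x,y,0],[0,0,δy]] : x,y ∈ F} of symmetric 3×3 matrices (γ, δ nonzero) are congruent (i.e., there is invertible D with D·M_γ·D^T = M_δ up to nonzero scalars) whenever γ/δ is a square in F_q. -/

import Mathlib

open Matrix

theorem stmt_5 (F : Type*) [Field F] [Fintype F] (hq : Odd (Fintype.card F))
    (γ δ : F) (hγ : γ ≠ 0) (hδ : δ ≠ 0) (hsq : IsSquare (γ / δ)) :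
    ∃ D : Matrix (Fin 3) (Fin 3) F, IsUnit D ∧
      {A | ∃ x y : F, A = D * !![0, x, 0; x, y, 0; 0, 0, γ * y] * Dᵀ} =
      {A : Matrix (Fin 3) (Fin 3) F | ∃ x y : F, A = !![0, x, 0; x, y, 0; 0, 0, δ * y]} := by
  obtain ⟨t, ht⟩ := hsq
  have ht0 : t ≠ 0 := by
    intro h
    rw [h, mul_zero] at ht
    exact hγ (by field_simp at ht; simpa using ht)
  have hγeq : γ = t * t * δ := by
    field_simp at ht
    linear_combination ht
  refine ⟨!![1, 0, 0; 0, 1, 0; 0, 0, t⁻¹], ?_, ?_⟩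
  · rw [Matrix.isUnit_iff_isUnit_det]
    simp [Matrix.det_fin_three, isUnit_iff_ne_zero, ht0]
  · have key : ∀ x y : F, !![(1:F), 0, 0; 0, 1, 0; 0, 0, t⁻¹] *
        !![0, x, 0; x, y, 0; 0, 0, γ * y] * !![(1:F), 0, 0; 0, 1, 0; 0, 0, t⁻¹]ᵀ =
        !![0, x, 0; x, y, 0; 0, 0, δ * y] := by
      intro x y
      have htr : !![(1:F), 0, 0; 0, 1, 0; 0, 0, t⁻¹]ᵀ = !![(1:F), 0, 0; 0, 1, 0; 0, 0, t⁻¹] := by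
        ext i j; fin_cases i <;> fin_cases j <;> rfl
      rw [htr]
      ext i j
      fin_cases i <;> fin_cases j <;>
        simp [Matrix.mul_apply, Fin.sum_univ_three, hγeq, Matrix.vecHead, Matrix.vecTail] <;>
        field_simp <;> ring
    ext A
    constructor
    · rintro ⟨x, y, rfl⟩
      exact ⟨x, y, (key x y).symm ▸ rfl⟩
    · rintro ⟨x, y, rfl⟩
      exact ⟨x, y, (key x y).symm⟩
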